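/- Let X be a finite ground set with m elements, let d ≥ 0 be an integer, and let f be a normalized monotone set function on X that is d-scopic submodular (equivalently, of supermodular width at most d). Let k be an integer with d + 1 ≤ k ≤ m and (d + 1) dividing k, and set t = k/(d + 1). Suppose S_0 = ∅ and for each i ∈ {1, …, t}, S_i = S_{i−1} ∪ T_i where T_i ⊆ X satisfies |T_i| ≤ d + 1 and f(T_i | S_{i−1}) ≥ f(T′ | S_{i−1}) for every T′ ⊆ X with |T′| ≤ d + 1 (batched greedy selection). Then |S_t| ≤ k and f(S_t) ≥ (1 − e^{−1/(d+1)}) · f(S*) for every S* ⊆ X with |S*| ≤ k. -/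

import Mathlib

variable {α : Type*} [Fintype α] [DecidableEq α]

/-- The margin of `S` given `T`: `f(S|T) = f(S ∪ T) - f(T)`. -/
def margin (f : Finset α → ℝ) (S T : Finset α) : ℝ := f (S ∪ T) - f T

/-- `f` is `d`-scopic submodular: for all `S ⊆ T` and `v ∉ T`,
`f({v}|T) ≤ max_{T' ⊆ T, |T'| ≤ d} f({v}|S ∪ T')`. -/
def ScopicSubmodular (d : ℕ) (f : Finset α → ℝ) : Prop :=
  ∀ S T : Finset α, S ⊆ T → ∀ v, v ∉ T →
    ∃ T' : Finset α, T' ⊆ T ∧ T'.card ≤ d ∧ margin f {v} T ≤ margin f {v} (S ∪ T')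

/-- batched greedy selection for cardinality-constrained maximization.
If `f` is normalized, monotone and `d`-scopic submodular, `k = (d+1)·t` with
`d + 1 ≤ k ≤ m`, and `S_i = S_{i-1} ∪ T_i` where each batch `T_i` (of size at most
`d + 1`) greedily maximizes the margin given `S_{i-1}`, then `|S_t| ≤ k` and
`f(S_t) ≥ (1 - e^{-1/(d+1)}) f(S*)` for every `S*` with `|S*| ≤ k`. -/
theorem batched_greedy_constrained_maximization (f : Finset α → ℝ)
    (hnorm : f ∅ = 0) (hmono : ∀ S T : Finset α, S ⊆ T → f S ≤ f T)
    (d : ℕ) (hscopic : ScopicSubmodular d f)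
    (k t : ℕ) (hk₁ : d + 1 ≤ k) (hk₂ : k ≤ Fintype.card α) (hkt : k = (d + 1) * t)
    (S T : ℕ → Finset α) (hS0 : S 0 = ∅)
    (hstep : ∀ i, 1 ≤ i → i ≤ t → S i = S (i - 1) ∪ T i)
    (hTcard : ∀ i, 1 ≤ i → i ≤ t → (T i).card ≤ d + 1)
    (hgreedy : ∀ i, 1 ≤ i → i ≤ t → ∀ T' : Finset α, T'.card ≤ d + 1 →
      margin f T' (S (i - 1)) ≤ margin f (T i) (S (i - 1))) :
    (S t).card ≤ k ∧
      ∀ Sstar : Finset α, Sstar.card ≤ k →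
        (1 - Real.exp (-(1 / ((d : ℝ) + 1)))) * f Sstar ≤ f (S t) := by
  have ht1 : 1 ≤ t := by
    rcases Nat.eq_zero_or_pos t with h | h
    · subst h; omega
    · exact h
  have hkpos : 0 < k := by omega
  -- greedy margins are nonnegative
  have hg0 : ∀ i, 1 ≤ i → i ≤ t → 0 ≤ margin f (T i) (S (i - 1)) := by
    intro i h1 h2
    have h := hgreedy i h1 h2 ∅ (by simp)
    have : margin f ∅ (S (i - 1)) = 0 := by simp [margin]
    linarith
  -- cardinality bound
  have hcard : ∀ i, i ≤ t → (S i).card ≤ (d + 1) * i := by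
    intro i
    induction i with
    | zero => intro _; simp [hS0]
    | succ i ih =>
      intro hit
      have h1 : 1 ≤ i + 1 := by omega
      have hS := hstep (i + 1) h1 hit
      simp only [Nat.add_sub_cancel] at hS
      have := Finset.card_union_le (S i) (T (i + 1))
      have hT := hTcard (i + 1) h1 hit
      have hih := ih (by omega)
      rw [hS]
      calc (S i ∪ T (i + 1)).card ≤ (S i).card + (T (i + 1)).card :=
            Finset.card_union_le _ _
        _ ≤ (d + 1) * i + (d + 1) := by omega
        _ = (d + 1) * (i + 1) := by ring
  -- key lemma: margin of any set P over any A ⊇ S(i-1) is at most |P| · g_i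
  have key : ∀ i, 1 ≤ i → i ≤ t → ∀ P : Finset α, ∀ A : Finset α, S (i - 1) ⊆ A →
      f (P ∪ A) - f A ≤ (P.card : ℝ) * margin f (T i) (S (i - 1)) := by
    intro i h1 h2 P
    induction P using Finset.induction_on with
    | empty => intro A hA; simp
    | @insert v P hv ih =>
      intro A hA
      have hAv : S (i - 1) ⊆ insert v A := hA.trans (Finset.subset_insert _ _)
      have h1' := ih (insert v A) hAv
      have hstepbound : f (insert v A) - f A ≤ margin f (T i) (S (i - 1)) := by
        by_cases hvA : v ∈ A
        · rw [Finset.insert_eq_self.2 hvA]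
          have := hg0 i h1 h2
          linarith
        · obtain ⟨T', hT'sub, hT'card, hle⟩ := hscopic (S (i - 1)) A hA v hvA
          have h2' : margin f {v} (S (i - 1) ∪ T') ≤
              margin f (insert v T') (S (i - 1)) := by
            unfold margin
            have hm := hmono (S (i - 1)) (S (i - 1) ∪ T') Finset.subset_union_left
            have heq : {v} ∪ (S (i - 1) ∪ T') = insert v T' ∪ S (i - 1) := by
              ext x
              simp [Finset.mem_union, Finset.mem_insert]
              tauto
            rw [heq]
            linarith
          have h3' := hgreedy i h1 h2 (insert v T') (by
            have := Finset.card_insert_le v T'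
            omega)
          have h4' : margin f {v} A = f (insert v A) - f A := by
            unfold margin
            rw [← Finset.insert_eq]
          linarith
      have hcrd : (insert v P).card = P.card + 1 := Finset.card_insert_of_notMem hv
      have hun : insert v P ∪ A = P ∪ insert v A := by
        ext x
        simp only [Finset.mem_union, Finset.mem_insert]
        tauto
      rw [hun, hcrd]
      push_cast
      linarith
  constructor
  · have := hcard t le_rfl
    omega
  · intro Sstar hSstar
    have hf0 : 0 ≤ f Sstar := by
      have := hmono ∅ Sstar (Finset.empty_subset _)
      linarith
    set c : ℝ := 1 - 1 / (k : ℝ) with hc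
    have hkR : (1 : ℝ) ≤ (k : ℝ) := by exact_mod_cast hkpos
    have hc0 : 0 ≤ c := by
      rw [hc]
      have : 1 / (k : ℝ) ≤ 1 := by
        rw [div_le_one (by linarith)]
        exact hkR
      linarith
    have hgap : ∀ i, i ≤ t → f Sstar - f (S i) ≤ c ^ i * f Sstar := by
      intro i
      induction i with
      | zero => intro _; simp [hS0, hnorm]
      | succ i ih =>
        intro hit
        have hit' : i ≤ t := by omega
        have ih' := ih hit'
        have h1 : 1 ≤ i + 1 := by omega
        have hkey := key (i + 1) h1 hit Sstar (S i) (by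
          simp only [Nat.add_sub_cancel]; exact Finset.Subset.refl _)
        simp only [Nat.add_sub_cancel] at hkey
        have hm := hmono Sstar (Sstar ∪ S i) Finset.subset_union_left
        have hg := hg0 (i + 1) h1 hit
        simp only [Nat.add_sub_cancel] at hg
        have hcard' : (Sstar.card : ℝ) ≤ (k : ℝ) := by exact_mod_cast hSstar
        have hbound : f Sstar - f (S i) ≤ (k : ℝ) * margin f (T (i + 1)) (S i) := by
          have := mul_le_mul_of_nonneg_right hcard' hg
          linarith
        have hSi1 : f (S (i + 1)) = f (S i) + margin f (T (i + 1)) (S i) := by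
          have hS := hstep (i + 1) h1 hit
          simp only [Nat.add_sub_cancel] at hS
          unfold margin
          rw [hS, Finset.union_comm]
          ring
        have hstep2 : f Sstar - f (S (i + 1)) ≤ c * (f Sstar - f (S i)) := by
          rw [hSi1, hc]
          have hkne : (k : ℝ) ≠ 0 := by positivity
          have hdiv : (f Sstar - f (S i)) / (k : ℝ) ≤ margin f (T (i + 1)) (S i) := by
            rw [div_le_iff₀ (by positivity)]
            calc f Sstar - f (S i) ≤ (k : ℝ) * margin f (T (i + 1)) (S i) := hbound
              _ = margin f (T (i + 1)) (S i) * (k : ℝ) := by ring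
          have : (1 - 1 / (k : ℝ)) * (f Sstar - f (S i)) =
              (f Sstar - f (S i)) - (f Sstar - f (S i)) / (k : ℝ) := by
            field_simp
          rw [this]
          linarith
        calc f Sstar - f (S (i + 1)) ≤ c * (f Sstar - f (S i)) := hstep2
          _ ≤ c * (c ^ i * f Sstar) := mul_le_mul_of_nonneg_left ih' hc0
          _ = c ^ (i + 1) * f Sstar := by ring
    have hfinal := hgap t le_rfl
    -- c^t ≤ exp (-1/(d+1))
    have hce : c ≤ Real.exp (-(1 / (k : ℝ))) := by
      have := Real.add_one_le_exp (-(1 / (k : ℝ)))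
      rw [hc]; linarith
    have hpow : c ^ t ≤ Real.exp (-(1 / (k : ℝ))) ^ t :=
      pow_le_pow_left₀ hc0 hce t
    have hexp : Real.exp (-(1 / (k : ℝ))) ^ t = Real.exp (-(1 / ((d : ℝ) + 1))) := by
      rw [← Real.exp_nat_mul]
      congr 1
      have hkR' : (k : ℝ) = ((d : ℝ) + 1) * (t : ℝ) := by
        rw [hkt]; push_cast; ring
      have htne : (t : ℝ) ≠ 0 := by
        have : (0 : ℝ) < (t : ℝ) := by exact_mod_cast ht1
        linarith
      have hdne : (d : ℝ) + 1 ≠ 0 := by positivity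
      rw [hkR']
      field_simp
    rw [hexp] at hpow
    have hct : c ^ t * f Sstar ≤ Real.exp (-(1 / ((d : ℝ) + 1))) * f Sstar :=
      mul_le_mul_of_nonneg_right hpow hf0
    nlinarith
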